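/- arXiv:1304.5830 — 3 statements merged into one kernel-verified Lean document; each statement's English description precedes it below -/
import Mathlib

section
/- Chu's bibasic summation formula: Let $m, n \ge 0$ be integers, let $\alpha, c, d$ be nonzero complex numbers, and let $(a_j)_{j \in \mathbb{Z}}$ and $(b_j)_{j \in \mathbb{Z}}$ be sequences of complex numbers, such that all factors occurring in denominators below are nonzero. For integers $k$, interpret $\prod_{j=0}^{k-1} x_j$ as the usual product when $k \ge 0$ and as $\prod_{j=k}^{-1} x_j^{-1}$ when $k < 0$, and interpret $\prod_{j=1}^{k} y_j$ as the usual product when $k \ge 0$ and as $\prod_{j=k+1}^{0} y_j^{-1}$ when $k < 0$. Then $\sum_{k=-m}^{n} \frac{(1-\alpha a_k b_k)(b_k - a_k/(\alpha d))}{(1-\alpha a_0 b_0)(b_0 - a_0/(\alpha d))} \cdot \frac{\prod_{j=0}^{k-1} (1-a_j)(1-a_j/d)(1-cb_j)(1-\alpha^2 d b_j/c)}{\prod_{j=1}^{k} (1-\alpha b_j)(1-\alpha a_j/c)(1-\alpha d b_j)(1-c a_j/(\alpha d))} = \frac{(1-a_0)(1-a_0/d)(1-cb_0)(1-\alpha^2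 d b_0/c)}{\alpha (1-\alpha a_0 b_0)(1-c/\alpha)(b_0 - a_0/(\alpha d))(1-\alpha d/c)} \cdot \Big( \prod_{j=1}^{n} \frac{(1-a_j)(1-a_j/d)(1-cb_j)(1-\alpha^2 d b_j/c)}{(1-\alpha b_j)(1-\alpha a_j/c)(1-\alpha d b_j)(1-c a_j/(\alpha d))} - \prod_{j=-m}^{0} \frac{(1-\alpha b_j)(1-\alpha a_j/c)(1-\alpha d b_j)(1-c a_j/(\alpha d))}{(1-a_j)(1-a_j/d)(1-cb_j)(1-\alpha^2 d b_j/c)} \Big)$. -/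
set_option autoImplicit false

/-- Generalized product `∏_{j=0}^{k-1} f j` for an integer upper parameter `k`:
for `k ≥ 0` it is the usual product, and for `k < 0` it is `∏_{j=k}^{-1} (f j)⁻¹`. -/
noncomputable def zProd (f : ℤ → ℂ) (k : ℤ) : ℂ :=
  if 0 ≤ k then ∏ j ∈ Finset.range k.toNat, f j
  else (∏ j ∈ Finset.range (-k).toNat, f (k + j))⁻¹

lemma zProd_ofNat (f : ℤ → ℂ) (n : ℕ) :
    zProd f (n : ℤ) = ∏ j ∈ Finset.range n, f j := by
  simp [zProd]

lemma zProd_nonpos (f : ℤ → ℂ) (k : ℤ) (hk : k ≤ 0) :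
    zProd f k = (∏ j ∈ Finset.range (-k).toNat, f (k + j))⁻¹ := by
  rcases eq_or_lt_of_le hk with h | h
  · subst h; simp [zProd]
  · rw [zProd, if_neg (by omega)]

lemma zProd_step_pos (f : ℤ → ℂ) (k : ℤ) (hk : 1 ≤ k) :
    zProd f k = zProd f (k - 1) * f (k - 1) := by
  rw [zProd, if_pos (by omega), zProd, if_pos (by omega)]
  have h1 : k.toNat = (k - 1).toNat + 1 := by omega
  rw [h1, Finset.prod_range_succ, Int.toNat_of_nonneg (by omega : (0:ℤ) ≤ k - 1)]

lemma zProd_step_nonpos (f : ℤ → ℂ) (k : ℤ) (hk : k ≤ 0) :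
    zProd f (k - 1) = (f (k - 1))⁻¹ * zProd f k := by
  have h1 : (-(k - 1)).toNat = (-k).toNat + 1 := by omega
  have h2 : (∏ j ∈ Finset.range ((-k).toNat + 1), f (k - 1 + (j : ℕ)))
      = f (k - 1) * ∏ j ∈ Finset.range (-k).toNat, f (k + (j : ℕ)) := by
    rw [Finset.prod_range_succ', mul_comm]
    congr 1
    · norm_num
    · apply Finset.prod_congr rfl
      intro x _
      congr 1
      push_cast
      ring
  rw [zProd_nonpos f (k - 1) (by omega), zProd_nonpos f k hk, h1, h2, mul_inv]

lemma zProd_shift (f : ℤ → ℂ) (hf0 : f 0 ≠ 0) (k : ℤ) :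
    zProd f k = f 0 * zProd (fun j => f (j + 1)) (k - 1) := by
  rcases le_or_gt 1 k with hk | hk
  · rw [zProd, if_pos (by omega), zProd, if_pos (by omega)]
    have h1 : k.toNat = (k - 1).toNat + 1 := by omega
    rw [h1, Finset.prod_range_succ', mul_comm,
      (by norm_num : f ((0:ℕ):ℤ) = f 0)]
    congr 1
  · rw [zProd_nonpos f k (by omega), zProd_nonpos _ (k - 1) (by omega)]
    have h1 : (-(k - 1)).toNat = (-k).toNat + 1 := by omega
    have h2 : (∏ j ∈ Finset.range ((-k).toNat + 1), f (k - 1 + (j : ℕ) + 1))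
        = (∏ j ∈ Finset.range (-k).toNat, f (k + (j : ℕ))) * f 0 := by
      rw [Finset.prod_range_succ]
      congr 1
      · apply Finset.prod_congr rfl
        intro x _
        congr 1
        ring
      · congr 1
        omega
    rw [h1, h2, mul_inv, mul_comm ((∏ j ∈ Finset.range (-k).toNat, f (k + (j : ℕ)))⁻¹),
      ← mul_assoc, mul_inv_cancel₀ hf0, one_mul]

lemma Icc_insert_top (lo x : ℤ) (h : lo ≤ x + 1) :
    Finset.Icc lo (x + 1) = insert (x + 1) (Finset.Icc lo x) := by
  ext y
  simp only [Finset.mem_Icc, Finset.mem_insert]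
  omega

lemma telescope (T : ℤ → ℂ) (lo : ℤ) (N : ℕ) :
    ∑ k ∈ Finset.Icc lo (lo + (N : ℤ)), (T k - T (k - 1)) = T (lo + (N : ℤ)) - T (lo - 1) := by
  induction N with
  | zero => simp
  | succ t ih =>
      have h1 : lo + ((t + 1 : ℕ) : ℤ) = (lo + (t : ℤ)) + 1 := by push_cast; ring
      rw [h1, Icc_insert_top lo (lo + t) (by omega),
        Finset.sum_insert (by simp only [Finset.mem_Icc]; omega), ih,
        (by ring : (lo + (t : ℤ)) + 1 - 1 = lo + (t : ℤ))]
      ring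

lemma prod_Icc_one_eq (g : ℤ → ℂ) (n : ℕ) :
    ∏ j ∈ Finset.Icc (1 : ℤ) (n : ℤ), g j = ∏ i ∈ Finset.range n, g ((i : ℤ) + 1) := by
  induction n with
  | zero => simp
  | succ t ih =>
      rw [(by push_cast; ring : ((t + 1 : ℕ) : ℤ) = (t : ℤ) + 1),
        Icc_insert_top 1 (t : ℤ) (by omega),
        Finset.prod_insert (by simp only [Finset.mem_Icc]; omega), ih,
        Finset.prod_range_succ]
      ring

lemma prod_Icc_neg_eq (g : ℤ → ℂ) (m : ℕ) :
    ∏ j ∈ Finset.Icc (-(m : ℤ)) (0 : ℤ), g j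
      = ∏ i ∈ Finset.range (m + 1), g ((i : ℤ) - (m : ℤ)) := by
  induction m with
  | zero => simp
  | succ t ih =>
      have h1 : Finset.Icc (-((t + 1 : ℕ) : ℤ)) 0
          = insert (-((t + 1 : ℕ) : ℤ)) (Finset.Icc (-(t : ℤ)) 0) := by
        ext y
        simp only [Finset.mem_Icc, Finset.mem_insert]
        push_cast
        omega
      rw [h1, Finset.prod_insert (by simp only [Finset.mem_Icc]; push_cast; omega), ih,
        Finset.prod_range_succ' (fun i : ℕ => g ((i : ℤ) - ((t + 1 : ℕ) : ℤ))) (t + 1),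
        mul_comm]
      congr 1
      apply Finset.prod_congr rfl
      intro x _
      congr 1
      push_cast
      ring

lemma chu_general (m n : ℕ) (P Q A : ℤ → ℂ) (w A0 : ℂ)
    (hw : w ≠ 0) (hA0 : A0 ≠ 0)
    (hkey : ∀ k, P k - Q k = w * A k)
    (hQpos : ∀ j ∈ Finset.Icc (1 : ℤ) (n : ℤ), Q j ≠ 0)
    (hPneg : ∀ j ∈ Finset.Icc (-(m : ℤ)) (0 : ℤ), P j ≠ 0) :
    ∑ k ∈ Finset.Icc (-(m : ℤ)) (n : ℤ),
        A k / A0 * (zProd P k / zProd (fun j => Q (j + 1)) k)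
      = P 0 / (w * A0) *
        ((∏ j ∈ Finset.Icc (1 : ℤ) (n : ℤ), P j / Q j)
          - ∏ j ∈ Finset.Icc (-(m : ℤ)) (0 : ℤ), Q j / P j) := by
  have hP0 : P 0 ≠ 0 := hPneg 0 (by simp)
  set C0 : ℂ := P 0 / (w * A0) with hC0
  set T : ℤ → ℂ := fun k =>
    C0 * (zProd (fun j => P (j + 1)) k / zProd (fun j => Q (j + 1)) k) with hT
  have term : ∀ k ∈ Finset.Icc (-(m : ℤ)) (n : ℤ),
      A k / A0 * (zProd P k / zProd (fun j => Q (j + 1)) k) = T k - T (k - 1) := by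
    intro k hk
    rw [Finset.mem_Icc] at hk
    have hkk := hkey k
    have e1 : zProd P k = P 0 * zProd (fun j => P (j + 1)) (k - 1) := zProd_shift P hP0 k
    rcases le_or_gt k 0 with hk0 | hk0
    · have hPk : P k ≠ 0 := hPneg k (Finset.mem_Icc.mpr ⟨hk.1, hk0⟩)
      have e2 : zProd (fun j => P (j + 1)) (k - 1)
          = (P k)⁻¹ * zProd (fun j => P (j + 1)) k := by
        have h := zProd_step_nonpos (fun j => P (j + 1)) k hk0
        simpa only [(by ring : k - 1 + 1 = k)] using h
      have e3 : zProd (fun j => Q (j + 1)) (k - 1)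
          = (Q k)⁻¹ * zProd (fun j => Q (j + 1)) k := by
        have h := zProd_step_nonpos (fun j => Q (j + 1)) k hk0
        simpa only [(by ring : k - 1 + 1 = k)] using h
      simp only [hT]
      rw [e1, e2, e3]
      set zp := zProd (fun j => P (j + 1)) k with hzp
      set zq := zProd (fun j => Q (j + 1)) k with hzq
      rcases eq_or_ne zq 0 with h | h
      · simp [h]
      · rcases eq_or_ne (Q k) 0 with hq | hq
        · have hPk2 : P k = w * A k := by linear_combination hkk + hq
          have hAk : A k ≠ 0 := by
            intro h'
            apply hPk
            rw [hPk2, h', mul_zero]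
          rw [hq, hPk2]
          simp only [inv_zero, zero_mul, div_zero, mul_zero, sub_zero]
          rw [hC0]
          field_simp
        · have hne : Q k + w * A k ≠ 0 := by
            intro h'
            apply hPk
            linear_combination hkk + h'
          rw [(by linear_combination hkk : P k = Q k + w * A k), hC0]
          field_simp
          have hne' : A k * w + Q k ≠ 0 := by rw [mul_comm, add_comm]; exact hne
          linear_combination zp * mul_inv_cancel₀ hne'
    · have hQk : Q k ≠ 0 := hQpos k (Finset.mem_Icc.mpr ⟨by omega, hk.2⟩)
      have e2 : zProd (fun j => P (j + 1)) k
          = zProd (fun j => P (j + 1)) (k - 1) * P k := by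
        have h := zProd_step_pos (fun j => P (j + 1)) k (by omega)
        simpa only [(by ring : k - 1 + 1 = k)] using h
      have e3 : zProd (fun j => Q (j + 1)) k
          = zProd (fun j => Q (j + 1)) (k - 1) * Q k := by
        have h := zProd_step_pos (fun j => Q (j + 1)) k (by omega)
        simpa only [(by ring : k - 1 + 1 = k)] using h
      simp only [hT]
      rw [e1, e2, e3]
      set zp := zProd (fun j => P (j + 1)) (k - 1) with hzp
      set zq := zProd (fun j => Q (j + 1)) (k - 1) with hzq
      rcases eq_or_ne zq 0 with h | h
      · simp [h]
      · rw [(by linear_combination hkk : P k = Q k + w * A k), hC0]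
        field_simp
        ring
  rw [Finset.sum_congr rfl term,
    (by congr 1; push_cast; ring :
      Finset.Icc (-(m : ℤ)) (n : ℤ) = Finset.Icc (-(m : ℤ)) (-(m : ℤ) + ((m + n : ℕ) : ℤ))),
    telescope T (-(m : ℤ)) (m + n),
    (by push_cast; ring : -(m : ℤ) + ((m + n : ℕ) : ℤ) = (n : ℤ))]
  have hinvdiv : ∀ X Y : ℂ, X⁻¹ / Y⁻¹ = Y / X := by
    intro X Y
    rw [div_eq_mul_inv, inv_inv, div_eq_mul_inv, mul_comm]
  have hTn : T (n : ℤ) = C0 * ((∏ j ∈ Finset.Icc (1 : ℤ) (n : ℤ), P j)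
      / (∏ j ∈ Finset.Icc (1 : ℤ) (n : ℤ), Q j)) := by
    simp only [hT]
    rw [zProd_ofNat, zProd_ofNat, prod_Icc_one_eq P n, prod_Icc_one_eq Q n]
  have hTneg : T (-(m : ℤ) - 1) = C0 * ((∏ j ∈ Finset.Icc (-(m : ℤ)) (0 : ℤ), Q j)
      / (∏ j ∈ Finset.Icc (-(m : ℤ)) (0 : ℤ), P j)) := by
    simp only [hT]
    have e : ∀ g : ℤ → ℂ, zProd (fun j => g (j + 1)) (-(m : ℤ) - 1)
        = (∏ j ∈ Finset.Icc (-(m : ℤ)) (0 : ℤ), g j)⁻¹ := by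
      intro g
      rw [zProd_nonpos _ _ (by omega), prod_Icc_neg_eq g m,
        (by omega : (-(-(m : ℤ) - 1)).toNat = m + 1)]
      congr 1
      apply Finset.prod_congr rfl
      intro x _
      show g (-(m : ℤ) - 1 + (x : ℤ) + 1) = g ((x : ℤ) - (m : ℤ))
      congr 1
      ring
    rw [e P, e Q, hinvdiv]
  rw [hTn, hTneg, Finset.prod_div_distrib, Finset.prod_div_distrib]
  ring

/-- Chu's bibasic summation formula. Here `zProd g k` encodes `∏_{j=0}^{k-1} g j`, and
`zProd (fun j => g (j+1)) k` encodes `∏_{j=1}^{k} g j`, with the stated conventions for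
negative `k`. -/
theorem chu_bibasic_summation (m n : ℕ) (α c d : ℂ) (a b : ℤ → ℂ)
    (hα : α ≠ 0) (hc : c ≠ 0) (hd : d ≠ 0)
    (h0 : 1 - α * a 0 * b 0 ≠ 0) (h0' : b 0 - a 0 / (α * d) ≠ 0)
    (hcα : 1 - c / α ≠ 0) (hdc : 1 - α * d / c ≠ 0)
    (hpos : ∀ j ∈ Finset.Icc (1 : ℤ) (n : ℤ),
      (1 - α * b j) * (1 - α * a j / c) * (1 - α * d * b j) * (1 - c * a j / (α * d)) ≠ 0)
    (hneg : ∀ j ∈ Finset.Icc (-(m : ℤ)) (0 : ℤ),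
      (1 - a j) * (1 - a j / d) * (1 - c * b j) * (1 - α ^ 2 * d * b j / c) ≠ 0) :
    ∑ k ∈ Finset.Icc (-(m : ℤ)) (n : ℤ),
      (1 - α * a k * b k) * (b k - a k / (α * d)) /
        ((1 - α * a 0 * b 0) * (b 0 - a 0 / (α * d))) *
        (zProd (fun j => (1 - a j) * (1 - a j / d) * (1 - c * b j) *
          (1 - α ^ 2 * d * b j / c)) k /
         zProd (fun j => (1 - α * b (j + 1)) * (1 - α * a (j + 1) / c) *
          (1 - α * d * b (j + 1)) * (1 - c * a (j + 1) / (α * d))) k)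
    = (1 - a 0) * (1 - a 0 / d) * (1 - c * b 0) * (1 - α ^ 2 * d * b 0 / c) /
        (α * (1 - α * a 0 * b 0) * (1 - c / α) * (b 0 - a 0 / (α * d)) * (1 - α * d / c)) *
        ((∏ j ∈ Finset.Icc (1 : ℤ) (n : ℤ),
            (1 - a j) * (1 - a j / d) * (1 - c * b j) * (1 - α ^ 2 * d * b j / c) /
              ((1 - α * b j) * (1 - α * a j / c) * (1 - α * d * b j) *
                (1 - c * a j / (α * d))))
          - ∏ j ∈ Finset.Icc (-(m : ℤ)) (0 : ℤ),
              (1 - α * b j) * (1 - α * a j / c) * (1 - α * d * b j) *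
                (1 - c * a j / (α * d)) /
                ((1 - a j) * (1 - a j / d) * (1 - c * b j) * (1 - α ^ 2 * d * b j / c))) := by
  have key : ∀ k : ℤ,
      (1 - a k) * (1 - a k / d) * (1 - c * b k) * (1 - α ^ 2 * d * b k / c)
        - (1 - α * b k) * (1 - α * a k / c) * (1 - α * d * b k) * (1 - c * a k / (α * d))
      = α * (1 - c / α) * (1 - α * d / c) *
          ((1 - α * a k * b k) * (b k - a k / (α * d))) := by
    intro k
    field_simp
    ring
  have hw : α * (1 - c / α) * (1 - α * d / c) ≠ 0 :=
    mul_ne_zero (mul_ne_zero hα hcα) hdc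
  have hA0 : (1 - α * a 0 * b 0) * (b 0 - a 0 / (α * d)) ≠ 0 := mul_ne_zero h0 h0'
  have main := chu_general m n
    (fun j => (1 - a j) * (1 - a j / d) * (1 - c * b j) * (1 - α ^ 2 * d * b j / c))
    (fun j => (1 - α * b j) * (1 - α * a j / c) * (1 - α * d * b j) * (1 - c * a j / (α * d)))
    (fun k => (1 - α * a k * b k) * (b k - a k / (α * d)))
    (α * (1 - c / α) * (1 - α * d / c))
    ((1 - α * a 0 * b 0) * (b 0 - a 0 / (α * d)))
    hw hA0 key hpos hneg
  rw [show α * (1 - α * a 0 * b 0) * (1 - c / α) * (b 0 - a 0 / (α * d)) * (1 - α * d / c)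
      = α * (1 - c / α) * (1 - α * d / c) *
          ((1 - α * a 0 * b 0) * (b 0 - a 0 / (α * d))) from by ring]
  exact main
end

section
/- Chen's general bibasic summation: Let $n \ge 0$ be an integer, let $d$ be a complex number, and let $(a_j)_{j \ge 0}$ and $(B_j)_{j \ge 0}$ be sequences of complex numbers such that all factors occurring in denominators below are nonzero. Define $F(n) = \frac{(1-B_0)(1-dB_0)}{(1-B_n)(1-dB_n)}$ and $G(n) = \frac{\prod_{j=0}^{n-1}(1-a_j)(d-a_j)}{\prod_{j=1}^{n}(1-B_j)(1-dB_j)}$. Then $F(n) = \sum_{k=0}^{n} \frac{(1-a_k B_k)(dB_k - a_k)}{(1-a_0 B_n)(dB_n - a_0)} \cdot \frac{\prod_{j=0}^{k-1}(B_n - B_j)(1 - dB_n B_j)}{\prod_{j=1}^{k}(1 - B_n a_j)(dB_n - a_j)} \, G(k)$. -/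
set_option autoImplicit false
set_option maxHeartbeats 1000000

/-- Chen's general bibasic summation, Eq. (6.2). -/
theorem chen_general_bibasic_summation (n : ℕ) (d : ℂ) (a B : ℕ → ℂ)
    (hBn : (1 - B n) * (1 - d * B n) ≠ 0)
    (hB : ∀ j, 1 ≤ j → j ≤ n → (1 - B j) * (1 - d * B j) ≠ 0)
    (ha0 : (1 - a 0 * B n) * (d * B n - a 0) ≠ 0)
    (haj : ∀ j, 1 ≤ j → j ≤ n → (1 - B n * a j) * (d * B n - a j) ≠ 0) :
    (1 - B 0) * (1 - d * B 0) / ((1 - B n) * (1 - d * B n))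
    = ∑ k ∈ Finset.range (n + 1),
        (1 - a k * B k) * (d * B k - a k) / ((1 - a 0 * B n) * (d * B n - a 0)) *
          ((∏ j ∈ Finset.range k, (B n - B j) * (1 - d * B n * B j)) /
            ∏ j ∈ Finset.range k, (1 - B n * a (j + 1)) * (d * B n - a (j + 1))) *
          ((∏ j ∈ Finset.range k, (1 - a j) * (d - a j)) /
            ∏ j ∈ Finset.range k, (1 - B (j + 1)) * (1 - d * B (j + 1))) := by
  set N := B n with hN
  set C0 : ℂ := (1 - a 0 * N) * (d * N - a 0) with hC0
  set u : ℕ → ℂ := fun k =>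
    (1 - B k) * (1 - d * B k) * ((1 - N * a k) * (d * N - a k)) *
      (∏ j ∈ Finset.range k, (N - B j) * (1 - d * N * B j)) *
      (∏ j ∈ Finset.range k, (1 - a j) * (d - a j)) /
      ((∏ j ∈ Finset.range k, (1 - B (j + 1)) * (1 - d * B (j + 1))) *
       ∏ j ∈ Finset.range k, (1 - N * a (j + 1)) * (d * N - a (j + 1))) with hu
  have hDk : ∀ k, k ≤ n → (∏ j ∈ Finset.range k, (1 - B (j + 1)) * (1 - d * B (j + 1))) ≠ 0 := by
    intro k hk
    refine Finset.prod_ne_zero_iff.mpr fun j hj => ?_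
    exact hB (j + 1) (Nat.le_add_left 1 j)
      (Nat.succ_le_of_lt (lt_of_lt_of_le (Finset.mem_range.mp hj) hk))
  have hQk : ∀ k, k ≤ n → (∏ j ∈ Finset.range k, (1 - N * a (j + 1)) * (d * N - a (j + 1))) ≠ 0 := by
    intro k hk
    refine Finset.prod_ne_zero_iff.mpr fun j hj => ?_
    exact haj (j + 1) (Nat.le_add_left 1 j)
      (Nat.succ_le_of_lt (lt_of_lt_of_le (Finset.mem_range.mp hj) hk))
  have hun1 : u (n + 1) = 0 := by
    have h0 : (∏ j ∈ Finset.range (n + 1), (N - B j) * (1 - d * N * B j)) = 0 :=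
      Finset.prod_eq_zero (Finset.self_mem_range_succ n) (by simp [hN])
    simp [hu, h0]
  have key : ∀ k ∈ Finset.range (n + 1),
      (1 - a k * B k) * (d * B k - a k) / C0 *
          ((∏ j ∈ Finset.range k, (N - B j) * (1 - d * N * B j)) /
            ∏ j ∈ Finset.range k, (1 - N * a (j + 1)) * (d * N - a (j + 1))) *
          ((∏ j ∈ Finset.range k, (1 - a j) * (d - a j)) /
            ∏ j ∈ Finset.range k, (1 - B (j + 1)) * (1 - d * B (j + 1)))
      = (u k - u (k + 1)) / ((1 - N) * (1 - d * N) * C0) := by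
    intro k hk
    have hk' : k ≤ n := Nat.lt_succ_iff.mp (Finset.mem_range.mp hk)
    have hD := hDk k hk'
    have hQ := hQk k hk'
    rcases hk'.lt_or_eq with hkn | rfl
    · have hD1 : (1 - B (k + 1)) * (1 - d * B (k + 1)) ≠ 0 :=
        hB (k + 1) (Nat.le_add_left 1 k) (Nat.succ_le_of_lt hkn)
      have hQ1 : (1 - N * a (k + 1)) * (d * N - a (k + 1)) ≠ 0 :=
        haj (k + 1) (Nat.le_add_left 1 k) (Nat.succ_le_of_lt hkn)
      simp only [hu, Finset.prod_range_succ]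
      set P := ∏ j ∈ Finset.range k, (N - B j) * (1 - d * N * B j) with hP
      set Q := ∏ j ∈ Finset.range k, (1 - N * a (j + 1)) * (d * N - a (j + 1)) with hQdef
      set R := ∏ j ∈ Finset.range k, (1 - a j) * (d - a j) with hR
      set D := ∏ j ∈ Finset.range k, (1 - B (j + 1)) * (1 - d * B (j + 1)) with hDdef
      obtain ⟨hN1, hN2⟩ := mul_ne_zero_iff.mp hBn
      have e1 : (1 - B (k + 1)) * (1 - d * B (k + 1)) *
            ((1 - N * a (k + 1)) * (d * N - a (k + 1))) *
            (P * ((N - B k) * (1 - d * N * B k))) *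
            (R * ((1 - a k) * (d - a k))) /
            (D * ((1 - B (k + 1)) * (1 - d * B (k + 1))) *
              (Q * ((1 - N * a (k + 1)) * (d * N - a (k + 1)))))
          = (N - B k) * (1 - d * N * B k) * ((1 - a k) * (d - a k)) * (P * R) / (D * Q) := by
        rw [div_eq_div_iff (by exact mul_ne_zero (mul_ne_zero hD hD1) (mul_ne_zero hQ hQ1))
          (mul_ne_zero hD hQ)]
        ring
      have e2 : (1 - B k) * (1 - d * B k) * ((1 - N * a k) * (d * N - a k)) * P * R / (D * Q)
          = (1 - B k) * (1 - d * B k) * ((1 - N * a k) * (d * N - a k)) * (P * R) / (D * Q) := by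
        ring
      rw [e1, e2, div_sub_div_same]
      have e3 : (1 - B k) * (1 - d * B k) * ((1 - N * a k) * (d * N - a k)) * (P * R)
            - (N - B k) * (1 - d * N * B k) * ((1 - a k) * (d - a k)) * (P * R)
          = (1 - a k * B k) * (d * B k - a k) * ((1 - N) * (1 - d * N)) * (P * R) := by
        ring
      rw [e3]
      field_simp
    · rw [hun1, sub_zero]
      simp only [hu, ← hN]
      set P := ∏ j ∈ Finset.range k, (N - B j) * (1 - d * N * B j) with hP
      set Q := ∏ j ∈ Finset.range k, (1 - N * a (j + 1)) * (d * N - a (j + 1)) with hQdef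
      set R := ∏ j ∈ Finset.range k, (1 - a j) * (d - a j) with hR
      set D := ∏ j ∈ Finset.range k, (1 - B (j + 1)) * (1 - d * B (j + 1)) with hDdef
      obtain ⟨hN1, hN2⟩ := mul_ne_zero_iff.mp hBn
      have hN2' : 1 - N * d ≠ 0 := by rwa [mul_comm]
      field_simp
  rw [Finset.sum_congr rfl key, ← Finset.sum_div, Finset.sum_range_sub' u, hun1, sub_zero]
  simp only [hu, Finset.range_zero, Finset.prod_empty]
  field_simp
  ring
end

section
/- Chen's inverse bibasic summation: Let $n \ge 0$ be an integer, let $d$ be a complex number, and let $(a_j)_{j \ge 0}$ and $(B_j)_{j \ge 0}$ be sequences of complex numbers with the $B_j$ ($0 \le j \le n$) pairwise distinct and all factors occurring in denominators below nonzero. Define $F(n) = \frac{(1-B_0)(1-dB_0)}{(1-B_n)(1-dB_n)}$ and $G(n) = \frac{\prod_{j=0}^{n-1}(1-a_j)(d-a_j)}{\prod_{j=1}^{n}(1-B_j)(1-dB_j)}$. Then $G(n) = \sum_{k=0}^{n} \frac{\prod_{j=0}^{n-1}(1 - B_k a_j)(dB_k - a_j)}{\prod_{0 \le j \le n,\, j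 \ne k}(1 - dB_k B_j)(B_k - B_j)} \, F(k)$. -/
set_option autoImplicit false

open Finset Polynomial in
private lemma lag_aux (n : ℕ) (t : ℕ → ℂ) (s : ℂ)
    (hinj : Set.InjOn t (Finset.range (n+1)))
    (hts : ∀ j ∈ Finset.range (n+1), t j ≠ s)
    (f : Polynomial ℂ) (hf : f.degree < ((n+1 : ℕ) : WithBot ℕ)) :
    f.eval s / ∏ j ∈ Finset.range (n+1), (t j - s)
      = ∑ k ∈ Finset.range (n+1), f.eval (t k) /
          ((t k - s) * ∏ j ∈ (Finset.range (n+1)).erase k, (t j - t k)) := by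
  have hF : f.eval s = ∑ k ∈ Finset.range (n+1),
      f.eval (t k) * (Lagrange.basis (Finset.range (n+1)) t k).eval s := by
    have hfi := Lagrange.eq_interpolate hinj (by simpa using hf)
    conv_lhs => rw [hfi]
    rw [Lagrange.interpolate_apply, Polynomial.eval_finset_sum]
    exact Finset.sum_congr rfl fun k hk => by rw [Polynomial.eval_mul, Polynomial.eval_C]
  rw [hF, Finset.sum_div]
  refine Finset.sum_congr rfl fun k hk => ?_
  have hbasis : (Lagrange.basis (Finset.range (n+1)) t k).eval s
      = (∏ j ∈ (Finset.range (n+1)).erase k, (t j - s)) *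
        (∏ j ∈ (Finset.range (n+1)).erase k, (t j - t k))⁻¹ := by
    rw [Lagrange.basis, Polynomial.eval_prod, ← Finset.prod_inv_distrib,
      ← Finset.prod_mul_distrib]
    refine Finset.prod_congr rfl fun j hj => ?_
    rw [Lagrange.basisDivisor]
    simp only [Polynomial.eval_mul, Polynomial.eval_C, Polynomial.eval_sub, Polynomial.eval_X]
    rw [show t j - t k = -(t k - t j) by ring, inv_neg]
    ring
  have hA : (∏ j ∈ (Finset.range (n+1)).erase k, (t j - s)) ≠ 0 :=
    Finset.prod_ne_zero_iff.mpr fun j hj =>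
      sub_ne_zero_of_ne (hts j (Finset.mem_of_mem_erase hj))
  have hB : (∏ j ∈ (Finset.range (n+1)).erase k, (t j - t k)) ≠ 0 :=
    Finset.prod_ne_zero_iff.mpr fun j hj => sub_ne_zero_of_ne (fun h =>
      (Finset.mem_erase.mp hj).1
        (hinj (by simpa using Finset.mem_of_mem_erase hj) (by simpa using hk) h))
  have hks : t k - s ≠ 0 := sub_ne_zero_of_ne (hts k hk)
  rw [hbasis, ← Finset.mul_prod_erase _ _ hk]
  field_simp

open Finset Polynomial in
private lemma chen_nonzero (n : ℕ) (d : ℂ) (a B : ℕ → ℂ)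
    (hdist : ∀ i ≤ n, ∀ j ≤ n, i ≠ j → B i ≠ B j)
    (hB : ∀ k ≤ n, (1 - B k) * (1 - d * B k) ≠ 0)
    (hdB : ∀ k ≤ n, ∀ j ≤ n, j ≠ k → 1 - d * B k * B j ≠ 0)
    (hB0 : ∀ k ≤ n, B k ≠ 0) :
    (∏ j ∈ Finset.range n, (1 - a j) * (d - a j)) /
      ∏ j ∈ Finset.range n, (1 - B (j + 1)) * (1 - d * B (j + 1))
    = ∑ k ∈ Finset.range (n + 1),
        (∏ j ∈ Finset.range n, (1 - B k * a j) * (d * B k - a j)) /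
          (∏ j ∈ (Finset.range (n + 1)).erase k, (1 - d * B k * B j) * (B k - B j)) *
          ((1 - B 0) * (1 - d * B 0) / ((1 - B k) * (1 - d * B k))) := by
  set s : ℂ := 1 + d with hs
  set t : ℕ → ℂ := fun k => d * B k + (B k)⁻¹ with ht
  have hmem : ∀ k, k ∈ Finset.range (n+1) → k ≤ n := fun k hk =>
    Nat.lt_succ_iff.mp (Finset.mem_range.mp hk)
  have key1 : ∀ k ≤ n, (1 - B k) * (1 - d * B k) = B k * (t k - s) := by
    intro k hk
    have hk0 := hB0 k hk
    simp only [ht, hs]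
    field_simp
    ring
  have key2 : ∀ k ≤ n, ∀ j ≤ n, (1 - d * B k * B j) * (B k - B j)
      = B k * B j * (t j - t k) := by
    intro k hk j hj
    have hk0 := hB0 k hk
    have hj0 := hB0 j hj
    simp only [ht]
    field_simp
    ring
  have hinj : Set.InjOn t (Finset.range (n+1)) := by
    intro x hx y hy hxy
    by_contra hne
    have hx' : x ≤ n := hmem x (by simpa using hx)
    have hy' : y ≤ n := hmem y (by simpa using hy)
    have h2 := key2 y hy' x hx'
    rw [hxy, sub_self, mul_zero] at h2
    exact mul_ne_zero (hdB y hy' x hx' hne) (sub_ne_zero_of_ne (hdist y hy' x hx' (Ne.symm hne)))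
      h2
  have hts : ∀ j ∈ Finset.range (n+1), t j ≠ s := by
    intro j hj
    have hj' := hmem j hj
    intro h
    have h1 := key1 j hj'
    rw [h, sub_self, mul_zero] at h1
    exact hB j hj' h1
  set f : Polynomial ℂ := ∏ j ∈ Finset.range n, (Polynomial.C (d + a j ^ 2)
    - Polynomial.C (a j) * Polynomial.X) with hf
  have hdeg : f.degree < ((n+1 : ℕ) : WithBot ℕ) := by
    have h1 : f.natDegree ≤ n := by
      refine le_trans (Polynomial.natDegree_prod_le _ _) ?_
      have : ∀ j ∈ Finset.range n,
          (Polynomial.C (d + a j ^ 2) - Polynomial.C (a j) * Polynomial.X).natDegree ≤ 1 := by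
        intro j _
        refine le_trans (Polynomial.natDegree_sub_le _ _) ?_
        refine max_le (by simp) (le_trans (Polynomial.natDegree_C_mul_le _ _) (by simp))
      refine le_trans (Finset.sum_le_card_nsmul _ _ 1 this) (by simp)
    calc f.degree ≤ (f.natDegree : WithBot ℕ) := Polynomial.degree_le_natDegree
      _ ≤ (n : WithBot ℕ) := by exact_mod_cast h1
      _ < ((n+1 : ℕ) : WithBot ℕ) := by exact_mod_cast Nat.lt_succ_self n
  have hftk : ∀ x : ℂ, f.eval x = ∏ j ∈ Finset.range n, ((d + a j ^ 2) - a j * x) := by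
    intro x
    rw [hf, Polynomial.eval_prod]
    exact Finset.prod_congr rfl fun j _ => by simp
  have hfs : f.eval s = ∏ j ∈ Finset.range n, (1 - a j) * (d - a j) := by
    rw [hftk s]
    refine Finset.prod_congr rfl fun j _ => ?_
    rw [hs]; ring
  set Q : ℂ := ∏ j ∈ Finset.range (n+1), B j with hQdef
  have hQ : Q ≠ 0 := Finset.prod_ne_zero_iff.mpr fun j hj => hB0 j (hmem j hj)
  set U : ℂ := ∏ j ∈ Finset.range (n+1), (t j - s) with hUdef
  have hU : U ≠ 0 := Finset.prod_ne_zero_iff.mpr fun j hj => sub_ne_zero_of_ne (hts j hj)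
  have hterm : ∀ k ∈ Finset.range (n+1),
      (∏ j ∈ Finset.range n, (1 - B k * a j) * (d * B k - a j)) /
        (∏ j ∈ (Finset.range (n + 1)).erase k, (1 - d * B k * B j) * (B k - B j)) *
        ((1 - B 0) * (1 - d * B 0) / ((1 - B k) * (1 - d * B k)))
      = (B 0 * (t 0 - s) / Q) *
        (f.eval (t k) / ((t k - s) * ∏ j ∈ (Finset.range (n+1)).erase k, (t j - t k))) := by
    intro k hk
    have hkn : k ≤ n := hmem k hk
    have hBk := hB0 k hkn
    have e1 : ∏ j ∈ Finset.range n, (1 - B k * a j) * (d * B k - a j)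
        = B k ^ n * f.eval (t k) := by
      calc ∏ j ∈ Finset.range n, (1 - B k * a j) * (d * B k - a j)
          = ∏ j ∈ Finset.range n, (B k * ((d + a j ^ 2) - a j * t k)) := by
            refine Finset.prod_congr rfl fun j _ => ?_
            simp only [ht]
            field_simp
            ring
        _ = B k ^ n * ∏ j ∈ Finset.range n, ((d + a j ^ 2) - a j * t k) := by
            rw [Finset.prod_mul_distrib, Finset.prod_const, Finset.card_range]
        _ = B k ^ n * f.eval (t k) := by rw [hftk]
    have e2 : ∏ j ∈ (Finset.range (n + 1)).erase k, (1 - d * B k * B j) * (B k - B j)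
        = B k ^ n * (∏ j ∈ (Finset.range (n+1)).erase k, B j) *
          ∏ j ∈ (Finset.range (n+1)).erase k, (t j - t k) := by
      calc ∏ j ∈ (Finset.range (n + 1)).erase k, (1 - d * B k * B j) * (B k - B j)
          = ∏ j ∈ (Finset.range (n+1)).erase k, (B k * (B j * (t j - t k))) := by
            refine Finset.prod_congr rfl fun j hj => ?_
            rw [key2 k hkn j (hmem j (Finset.mem_of_mem_erase hj))]
            ring
        _ = _ := by
            rw [Finset.prod_mul_distrib, Finset.prod_mul_distrib, Finset.prod_const,
              Finset.card_erase_of_mem hk, Finset.card_range, Nat.add_sub_cancel, mul_assoc]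
    have e3 := key1 k hkn
    have e4 := key1 0 (Nat.zero_le n)
    rw [e1, e2, e3, e4]
    have hQk : (∏ j ∈ (Finset.range (n+1)).erase k, B j) ≠ 0 :=
      Finset.prod_ne_zero_iff.mpr fun j hj => hB0 j (hmem j (Finset.mem_of_mem_erase hj))
    have hT : (∏ j ∈ (Finset.range (n+1)).erase k, (t j - t k)) ≠ 0 :=
      Finset.prod_ne_zero_iff.mpr fun j hj => sub_ne_zero_of_ne (fun h =>
        (Finset.mem_erase.mp hj).1
          (hinj (by simpa using Finset.mem_of_mem_erase hj) (by simpa using hk) h))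
    have hks : t k - s ≠ 0 := sub_ne_zero_of_ne (hts k hk)
    have hQeq : Q = B k * ∏ j ∈ (Finset.range (n+1)).erase k, B j :=
      (Finset.mul_prod_erase _ _ hk).symm
    rw [hQeq]
    have hBkn : (B k : ℂ) ^ n ≠ 0 := pow_ne_zero _ hBk
    field_simp
  rw [Finset.sum_congr rfl hterm, ← Finset.mul_sum,
    ← lag_aux n t s hinj hts f hdeg]
  have hV : (∏ j ∈ Finset.range n, (1 - B (j+1)) * (1 - d * B (j+1)))
      = ∏ j ∈ Finset.range n, (B (j+1) * (t (j+1) - s)) :=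
    Finset.prod_congr rfl fun j hj => key1 (j+1) (Finset.mem_range.mp hj)
  have hVQ : B 0 * (t 0 - s) * ∏ j ∈ Finset.range n, (B (j+1) * (t (j+1) - s)) = Q * U := by
    rw [hQdef, hUdef, ← Finset.prod_mul_distrib, Finset.prod_range_succ']
    exact mul_comm _ _
  have hVne : (∏ j ∈ Finset.range n, (B (j+1) * (t (j+1) - s))) ≠ 0 :=
    Finset.prod_ne_zero_iff.mpr fun j hj =>
      mul_ne_zero (hB0 (j+1) (Finset.mem_range.mp hj))
        (sub_ne_zero_of_ne (hts (j+1) (Finset.mem_range.mpr (Nat.succ_lt_succ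
          (Finset.mem_range.mp hj)))))
  rw [← hfs, hV]
  have hb0 : B 0 ≠ 0 := hB0 0 (Nat.zero_le n)
  have h0s : t 0 - s ≠ 0 := sub_ne_zero_of_ne (hts 0 (by simp))
  rw [div_mul_div_comm, ← hVQ]
  exact (mul_div_mul_left _ _ (mul_ne_zero hb0 h0s)).symm

/-- Chen's inverse bibasic summation, Eq. (6.3). -/
theorem chen_inverse_bibasic_summation (n : ℕ) (d : ℂ) (a B : ℕ → ℂ)
    (hdist : ∀ i ≤ n, ∀ j ≤ n, i ≠ j → B i ≠ B j)
    (hB : ∀ k ≤ n, (1 - B k) * (1 - d * B k) ≠ 0)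
    (hdB : ∀ k ≤ n, ∀ j ≤ n, j ≠ k → 1 - d * B k * B j ≠ 0) :
    (∏ j ∈ Finset.range n, (1 - a j) * (d - a j)) /
      ∏ j ∈ Finset.range n, (1 - B (j + 1)) * (1 - d * B (j + 1))
    = ∑ k ∈ Finset.range (n + 1),
        (∏ j ∈ Finset.range n, (1 - B k * a j) * (d * B k - a j)) /
          (∏ j ∈ (Finset.range (n + 1)).erase k, (1 - d * B k * B j) * (B k - B j)) *
          ((1 - B 0) * (1 - d * B 0) / ((1 - B k) * (1 - d * B k))) := by
  by_cases hz : ∀ k ≤ n, B k ≠ 0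
  · exact chen_nonzero n d a B hdist hB hdB hz
  push_neg at hz
  obtain ⟨m, hmn, hm0⟩ := hz
  set B' : ℂ → ℕ → ℂ := fun x j => if j = m then x else B j with hB'def
  have hB'0 : B' 0 = B := by
    funext j
    by_cases h : j = m
    · subst h; simp only [hB'def, if_pos rfl, hm0]
    · simp only [hB'def, if_neg h]
  set L : ℂ → ℂ := fun x => (∏ j ∈ Finset.range n, (1 - a j) * (d - a j)) /
      ∏ j ∈ Finset.range n, (1 - B' x (j + 1)) * (1 - d * B' x (j + 1)) with hLdef
  set R : ℂ → ℂ := fun x => ∑ k ∈ Finset.range (n + 1),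
      (∏ j ∈ Finset.range n, (1 - B' x k * a j) * (d * B' x k - a j)) /
        (∏ j ∈ (Finset.range (n + 1)).erase k,
          (1 - d * B' x k * B' x j) * (B' x k - B' x j)) *
        ((1 - B' x 0) * (1 - d * B' x 0) / ((1 - B' x k) * (1 - d * B' x k))) with hRdef
  suffices h : L 0 = R 0 by
    simp only [hLdef, hRdef, hB'0] at h
    exact h
  -- continuity of the coordinate functions
  have hcB' : ∀ j, Continuous fun x : ℂ => B' x j := by
    intro j
    by_cases h : j = m
    · simp only [hB'def, if_pos h]; exact continuous_id
    · simp only [hB'def, if_neg h]; exact continuous_const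
  have hne : ∀ j ≤ n, j ≠ m → B j ≠ 0 := by
    intro j hj hjm
    rw [← hm0]
    exact hdist j hj m hmn hjm
  have hmem : ∀ k, k ∈ Finset.range (n+1) → k ≤ n := fun k hk =>
    Nat.lt_succ_iff.mp (Finset.mem_range.mp hk)
  -- continuity at 0 of both sides
  have hLc : ContinuousAt L 0 := by
    rw [hLdef]
    apply ContinuousAt.div continuousAt_const
    · exact (continuous_finset_prod _ fun j _ =>
        ((continuous_const.sub (hcB' (j+1))).mul
          (continuous_const.sub (continuous_const.mul (hcB' (j+1)))))).continuousAt
    · rw [hB'0]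
      exact Finset.prod_ne_zero_iff.mpr fun j hj => hB (j+1) (Finset.mem_range.mp hj)
  have hRc : ContinuousAt R 0 := by
    rw [hRdef]
    apply tendsto_finset_sum
    intro k hk
    have hkn := hmem k hk
    have hnum : Continuous fun x : ℂ =>
        ∏ j ∈ Finset.range n, (1 - B' x k * a j) * (d * B' x k - a j) :=
      continuous_finset_prod _ fun j _ =>
        ((continuous_const.sub ((hcB' k).mul continuous_const)).mul
          ((continuous_const.mul (hcB' k)).sub continuous_const))
    have hden : Continuous fun x : ℂ =>
        ∏ j ∈ (Finset.range (n + 1)).erase k,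
          (1 - d * B' x k * B' x j) * (B' x k - B' x j) :=
      continuous_finset_prod _ fun j _ =>
        ((continuous_const.sub ((continuous_const.mul (hcB' k)).mul (hcB' j))).mul
          ((hcB' k).sub (hcB' j)))
    have hden0 : (∏ j ∈ (Finset.range (n + 1)).erase k,
        (1 - d * B' (0:ℂ) k * B' (0:ℂ) j) * (B' (0:ℂ) k - B' (0:ℂ) j)) ≠ 0 := by
      rw [hB'0]
      refine Finset.prod_ne_zero_iff.mpr fun j hj => ?_
      have hjk := (Finset.mem_erase.mp hj).1
      have hjn := hmem j (Finset.mem_of_mem_erase hj)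
      exact mul_ne_zero (hdB k hkn j hjn hjk)
        (sub_ne_zero_of_ne (hdist k hkn j hjn (Ne.symm hjk)))
    have hnum2 : Continuous fun x : ℂ => (1 - B' x 0) * (1 - d * B' x 0) :=
      (continuous_const.sub (hcB' 0)).mul
        (continuous_const.sub (continuous_const.mul (hcB' 0)))
    have hden2 : Continuous fun x : ℂ => (1 - B' x k) * (1 - d * B' x k) :=
      (continuous_const.sub (hcB' k)).mul
        (continuous_const.sub (continuous_const.mul (hcB' k)))
    have hden20 : ((1 - B' (0:ℂ) k) * (1 - d * B' (0:ℂ) k)) ≠ 0 := by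
      rw [hB'0]; exact hB k hkn
    exact (ContinuousAt.div hnum.continuousAt hden.continuousAt hden0).mul
      (ContinuousAt.div hnum2.continuousAt hden2.continuousAt hden20)
  -- eventual equality on the punctured neighborhood
  have gadget : ∀ (g : ℂ → ℂ), Continuous g → g 0 ≠ 0 → ∀ᶠ x in nhds (0:ℂ), g x ≠ 0 :=
    fun g hg h0 => hg.continuousAt.eventually_ne h0
  have h1 : ∀ᶠ x in nhds (0:ℂ), ∀ j ∈ Finset.range (n+1), j ≠ m → x ≠ B j := by
    rw [Filter.eventually_all_finset]
    intro j hj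
    by_cases hjm : j = m
    · exact Filter.Eventually.of_forall fun x h => absurd hjm h
    · exact (eventually_ne_nhds (Ne.symm (hne j (hmem j hj) hjm))).mono fun x hx _ => hx
  have h2 : ∀ᶠ x in nhds (0:ℂ), ∀ j ∈ Finset.range (n+1),
      (1 - d * x * B j ≠ 0 ∧ 1 - d * B j * x ≠ 0) := by
    rw [Filter.eventually_all_finset]
    intro j hj
    refine Filter.Eventually.and ?_ ?_
    · exact gadget _ (continuous_const.sub ((continuous_const.mul continuous_id).mul
        continuous_const)) (by simp)
    · exact gadget _ (continuous_const.sub (continuous_const.mul continuous_id)) (by simp)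
  have h3 : ∀ᶠ x in nhds (0:ℂ), (1 - x) * (1 - d * x) ≠ 0 :=
    gadget _ ((continuous_const.sub continuous_id).mul
      (continuous_const.sub (continuous_const.mul continuous_id))) (by simp)
  have h4 : ∀ᶠ x in nhdsWithin (0:ℂ) {(0:ℂ)}ᶜ, x ≠ 0 := by
    have := self_mem_nhdsWithin (a := (0:ℂ)) (s := {(0:ℂ)}ᶜ)
    exact Filter.eventually_iff_exists_mem.mpr ⟨_, this, fun x hx => hx⟩
  have hev : ∀ᶠ x in nhdsWithin (0:ℂ) {(0:ℂ)}ᶜ, L x = R x := by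
    filter_upwards [h1.filter_mono nhdsWithin_le_nhds, h2.filter_mono nhdsWithin_le_nhds,
      h3.filter_mono nhdsWithin_le_nhds, h4] with x hx1 hx2 hx3 hx4
    have hBx : ∀ j ≤ n, B' x j = if j = m then x else B j := fun j _ => rfl
    have hdist' : ∀ i ≤ n, ∀ j ≤ n, i ≠ j → B' x i ≠ B' x j := by
      intro i hi j hj hij
      by_cases him : i = m
      · have hjm : j ≠ m := fun h => hij (him.trans h.symm)
        simp only [hB'def, if_pos him, if_neg hjm]
        exact hx1 j (Finset.mem_range.mpr (Nat.lt_succ_of_le hj)) hjm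
      · by_cases hjm : j = m
        · simp only [hB'def, if_neg him, if_pos hjm]
          exact fun h =>
            (hx1 i (Finset.mem_range.mpr (Nat.lt_succ_of_le hi)) him) h.symm
        · simp only [hB'def, if_neg him, if_neg hjm]
          exact hdist i hi j hj hij
    have hB'' : ∀ k ≤ n, (1 - B' x k) * (1 - d * B' x k) ≠ 0 := by
      intro k hk
      by_cases hkm : k = m
      · simp only [hB'def, if_pos hkm]; exact hx3
      · simp only [hB'def, if_neg hkm]; exact hB k hk
    have hdB'' : ∀ k ≤ n, ∀ j ≤ n, j ≠ k → 1 - d * B' x k * B' x j ≠ 0 := by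
      intro k hk j hj hjk
      by_cases hkm : k = m
      · have hjm : j ≠ m := fun h => hjk (h.trans hkm.symm)
        simp only [hB'def, if_pos hkm, if_neg hjm]
        exact (hx2 j (Finset.mem_range.mpr (Nat.lt_succ_of_le hj))).1
      · by_cases hjm : j = m
        · simp only [hB'def, if_neg hkm, if_pos hjm]
          exact (hx2 k (Finset.mem_range.mpr (Nat.lt_succ_of_le hk))).2
        · simp only [hB'def, if_neg hkm, if_neg hjm]
          exact hdB k hk j hj hjk
    have hB0'' : ∀ k ≤ n, B' x k ≠ 0 := by
      intro k hk
      by_cases hkm : k = m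
      · simp only [hB'def, if_pos hkm]; exact hx4
      · simp only [hB'def, if_neg hkm]; exact hne k hk hkm
    simp only [hLdef, hRdef]
    exact chen_nonzero n d a (B' x) hdist' hB'' hdB'' hB0''
  haveI : Filter.NeBot (nhdsWithin (0:ℂ) {(0:ℂ)}ᶜ) := by
    exact NormedField.nhdsNE_neBot 0
  have t1 : Filter.Tendsto L (nhdsWithin (0:ℂ) {(0:ℂ)}ᶜ) (nhds (L 0)) :=
    hLc.continuousWithinAt
  have t2 : Filter.Tendsto R (nhdsWithin (0:ℂ) {(0:ℂ)}ᶜ) (nhds (R 0)) :=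
    hRc.continuousWithinAt
  exact tendsto_nhds_unique t1 (Filter.Tendsto.congr' (Filter.EventuallyEq.symm hev) t2)
end
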